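/- arXiv:0707.2134 — 5 statements merged into one kernel-verified Lean document; each statement's English description precedes it below -/
import Mathlib

section
/- Let {b_i} ∈ ℓ¹, a ∈ ℝ, {τ_i} strictly increasing positive reals with τ_i → ∞, and φ ∈ BC(-∞,0]. Then there exists a unique continuous function x: ℝ → ℝ with x(θ) = φ(θ) for θ ≤ 0, x continuously differentiable on [0,∞), and x'(t) = a x(t) + Σ_{i=1}^∞ b_i x(t - τ_i) for all t ≥ 0. -/
open Filter

/-- x : ℝ → ℝ is a solution of the infinite-delay equation
x'(t) = a x(t) + Σ_i b_i x(t - τ_i) (t ≥ 0), x = φ on (-∞,0]: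
x is continuous, agrees with φ on (-∞,0], and its restriction to [0,∞) is C¹
with the required derivative. -/
def IsSolution (a : ℝ) (b τ : ℕ → ℝ) (φ x : ℝ → ℝ) : Prop :=
  Continuous x ∧ (∀ θ ≤ (0:ℝ), x θ = φ θ) ∧
  (∀ t ≥ (0:ℝ), Summable fun i => b i * x (t - τ i)) ∧
  (∀ t ≥ (0:ℝ), HasDerivWithinAt x (a * x t + ∑' i, b i * x (t - τ i)) (Set.Ici 0) t) ∧
  ContinuousOn (fun t => a * x t + ∑' i, b i * x (t - τ i)) (Set.Ici 0)

/-- The infinite sum forcing term. -/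
noncomputable def picF (b τ : ℕ → ℝ) (g : ℝ → ℝ) : ℝ → ℝ :=
  fun s => ∑' i, b i * g (s - τ i)

theorem picF_apply (b τ : ℕ → ℝ) (g : ℝ → ℝ) (s : ℝ) :
    picF b τ g s = ∑' i, b i * g (s - τ i) := rfl

/-- One Picard-type step: variation of constants formula with forcing from `g`. -/
noncomputable def pic (a : ℝ) (b τ : ℕ → ℝ) (φ g : ℝ → ℝ) : ℝ → ℝ := fun t =>
  if t ≤ 0 then φ (min t 0)
  else Real.exp (a * t) *
    (φ 0 + ∫ s in (0:ℝ)..t, Real.exp (-(a * s)) * picF b τ g s)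

/-- Iterates of the Picard-type step starting from the extended initial function. -/
noncomputable def picSeq (a : ℝ) (b τ : ℕ → ℝ) (φ : ℝ → ℝ) : ℕ → ℝ → ℝ
  | 0 => fun t => φ (min t 0)
  | n + 1 => pic a b τ φ (picSeq a b τ φ n)

/-- The candidate solution, defined by the method of steps. -/
noncomputable def sol (a : ℝ) (b τ : ℕ → ℝ) (φ : ℝ → ℝ) : ℝ → ℝ :=
  fun t => picSeq a b τ φ ⌈t / τ 0⌉₊ t

/-- For {b_i} ∈ ℓ¹, a ∈ ℝ, {τ_i} strictly increasing positive with
τ_i → ∞ and φ ∈ BC(-∞,0], the infinite delay equation has a unique solution. -/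
theorem exists_unique_solution_l1 (a : ℝ) (b τ : ℕ → ℝ)
    (hb : Summable fun i => |b i|)
    (hτ : StrictMono τ) (hτpos : ∀ i, 0 < τ i)
    (hτtop : Tendsto τ atTop atTop)
    (φ : ℝ → ℝ) (hφc : ContinuousOn φ (Set.Iic 0))
    (hφb : ∃ M : ℝ, ∀ θ ≤ (0:ℝ), |φ θ| ≤ M) :
    ∃! x : ℝ → ℝ, IsSolution a b τ φ x := by
  obtain ⟨M₀, hM₀⟩ := hφb
  have hτ0 : 0 < τ 0 := hτpos 0
  have hτge : ∀ i, τ 0 ≤ τ i := fun i => hτ.monotone (Nat.zero_le i)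
  -- continuous functions agreeing with φ on Iic 0 are bounded on each Iic T
  have hbound : ∀ f : ℝ → ℝ, Continuous f → (∀ θ ≤ (0:ℝ), f θ = φ θ) →
      ∀ T : ℝ, ∃ M, 0 ≤ M ∧ ∀ t ≤ T, |f t| ≤ M := by
    intro f hfc hf0 T
    obtain ⟨M₁, hM₁⟩ :=
      (isCompact_Icc (a := (0:ℝ)) (b := max 0 T)).exists_bound_of_continuousOn hfc.continuousOn
    refine ⟨max (max M₀ M₁) 0, le_max_right _ _, fun t ht => ?_⟩
    rcases le_or_gt t 0 with h | h
    · rw [hf0 t h]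
      exact le_trans (hM₀ t h) (le_trans (le_max_left _ _) (le_max_left _ _))
    · have hmem : t ∈ Set.Icc (0:ℝ) (max 0 T) := ⟨h.le, le_trans ht (le_max_right 0 T)⟩
      have := hM₁ t hmem
      rw [Real.norm_eq_abs] at this
      exact le_trans this (le_trans (le_max_right _ _) (le_max_left _ _))
  -- continuity of the forcing term
  have hpicFc : ∀ g : ℝ → ℝ, Continuous g → (∀ T, ∃ M, 0 ≤ M ∧ ∀ t ≤ T, |g t| ≤ M) →
      Continuous (picF b τ g) := by
    intro g hgc hgb
    rw [continuous_iff_continuousAt]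
    intro t
    obtain ⟨M, hM0, hM⟩ := hgb (t + 1)
    have hcont : ContinuousOn (fun s : ℝ => ∑' i, b i * g (s - τ i)) (Set.Iic (t + 1)) := by
      refine continuousOn_tsum (u := fun i => |b i| * M)
        (fun i => ((continuous_const.mul
          (hgc.comp (continuous_id.sub continuous_const)))).continuousOn)
        (hb.mul_right M) ?_
      intro i s hs
      rw [Real.norm_eq_abs, abs_mul]
      refine mul_le_mul_of_nonneg_left (hM _ ?_) (abs_nonneg _)
      have : s - τ i ≤ s := sub_le_self s (hτpos i).le
      exact le_trans this hs
    exact hcont.continuousAt (Iic_mem_nhds (lt_add_one t))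
  -- summability of the forcing term
  have hsumm : ∀ g : ℝ → ℝ, (∀ T, ∃ M, 0 ≤ M ∧ ∀ t ≤ T, |g t| ≤ M) →
      ∀ t : ℝ, Summable fun i => b i * g (t - τ i) := by
    intro g hgb t
    obtain ⟨M, hM0, hM⟩ := hgb t
    refine Summable.of_norm_bounded (hb.mul_right M) ?_
    intro i
    rw [Real.norm_eq_abs, abs_mul]
    exact mul_le_mul_of_nonneg_left (hM _ (sub_le_self t (hτpos i).le)) (abs_nonneg _)
  -- continuity of the extended initial function
  have hφbar : Continuous fun t : ℝ => φ (min t 0) :=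
    hφc.comp_continuous (continuous_id.min continuous_const) (fun x => min_le_right x 0)
  -- pic preserves goodness
  have hpic : ∀ g : ℝ → ℝ, Continuous g → (∀ θ ≤ (0:ℝ), g θ = φ θ) →
      Continuous (pic a b τ φ g) ∧ (∀ θ ≤ (0:ℝ), pic a b τ φ g θ = φ θ) := by
    intro g hgc hg0
    have hF : Continuous (picF b τ g) := hpicFc g hgc (hbound g hgc hg0)
    have hint : Continuous fun s : ℝ => Real.exp (-(a * s)) * picF b τ g s :=
      (Real.continuous_exp.comp (continuous_const.mul continuous_id).neg).mul hF
    have hprim : Continuous fun t : ℝ =>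
        ∫ s in (0:ℝ)..t, Real.exp (-(a * s)) * picF b τ g s :=
      intervalIntegral.continuous_primitive (fun u v => hint.intervalIntegrable u v) 0
    have hh : Continuous fun t : ℝ => Real.exp (a * t) *
        (φ 0 + ∫ s in (0:ℝ)..t, Real.exp (-(a * s)) * picF b τ g s) :=
      (Real.continuous_exp.comp (continuous_const.mul continuous_id)).mul
        (continuous_const.add hprim)
    constructor
    · refine Continuous.if_le hφbar hh continuous_id continuous_const ?_
      intro x hx
      change x = 0 at hx
      subst hx
      simp [Real.exp_zero, intervalIntegral.integral_same]
    · intro θ hθ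
      simp only [pic, if_pos hθ, min_eq_left hθ]
  -- properties of the iterates
  have hseq : ∀ n, Continuous (picSeq a b τ φ n) ∧
      (∀ θ ≤ (0:ℝ), picSeq a b τ φ n θ = φ θ) := by
    intro n
    induction n with
    | zero => exact ⟨hφbar, fun θ hθ => by simp [picSeq, min_eq_left hθ]⟩
    | succ n ih => exact hpic _ ih.1 ih.2
  -- one-step agreement
  have hagree : ∀ n : ℕ, ∀ t ≤ (n:ℝ) * τ 0,
      picSeq a b τ φ (n + 1) t = picSeq a b τ φ n t := by
    intro n
    induction n with
    | zero =>
      intro t ht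
      norm_num at ht
      show pic a b τ φ (picSeq a b τ φ 0) t = _
      simp [pic, if_pos ht, picSeq]
    | succ n ih =>
      intro t ht
      show pic a b τ φ (picSeq a b τ φ (n + 1)) t = pic a b τ φ (picSeq a b τ φ n) t
      by_cases h0 : t ≤ 0
      · simp [pic, if_pos h0]
      · simp only [pic, if_neg h0]
        have hint : (∫ s in (0:ℝ)..t, Real.exp (-(a * s)) * picF b τ (picSeq a b τ φ (n + 1)) s)
            = ∫ s in (0:ℝ)..t, Real.exp (-(a * s)) * picF b τ (picSeq a b τ φ n) s := by
          refine intervalIntegral.integral_congr fun s hs => ?_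
          rw [Set.uIcc_of_le (le_of_not_ge h0)] at hs
          congr 1
          refine tsum_congr fun i => ?_
          congr 1
          refine ih (s - τ i) ?_
          have h1 : s ≤ t := hs.2
          have h2 : τ 0 ≤ τ i := hτge i
          push_cast at ht ⊢
          linarith
        rw [hint]
  -- many-step agreement
  have hagree2 : ∀ n m : ℕ, n ≤ m → ∀ t ≤ (n:ℝ) * τ 0,
      picSeq a b τ φ m t = picSeq a b τ φ n t := by
    intro n m hnm
    induction m, hnm using Nat.le_induction with
    | base => intro t _; rfl
    | succ m hm ih =>
      intro t ht
      have h1 : (n:ℝ) * τ 0 ≤ (m:ℝ) * τ 0 :=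
        mul_le_mul_of_nonneg_right (Nat.cast_le.2 hm) hτ0.le
      rw [hagree m t (le_trans ht h1)]
      exact ih t ht
  -- t is below its own ceiling level
  have hceil : ∀ t : ℝ, t ≤ (⌈t / τ 0⌉₊ : ℝ) * τ 0 := by
    intro t
    have h1 : t / τ 0 ≤ (⌈t / τ 0⌉₊ : ℝ) := Nat.le_ceil _
    calc t = t / τ 0 * τ 0 := (div_mul_cancel₀ t hτ0.ne').symm
    _ ≤ (⌈t / τ 0⌉₊ : ℝ) * τ 0 := mul_le_mul_of_nonneg_right h1 hτ0.le
  -- sol agrees with every sufficiently advanced iterate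
  have hsol_eq : ∀ n : ℕ, ∀ t ≤ (n:ℝ) * τ 0, sol a b τ φ t = picSeq a b τ φ n t := by
    intro n t ht
    show picSeq a b τ φ ⌈t / τ 0⌉₊ t = _
    rcases le_total n ⌈t / τ 0⌉₊ with h | h
    · exact hagree2 n _ h t ht
    · exact (hagree2 _ n h t (hceil t)).symm
  have hsol0 : ∀ θ ≤ (0:ℝ), sol a b τ φ θ = φ θ := by
    intro θ hθ
    rw [hsol_eq 0 θ (by simpa using hθ)]
    exact (hseq 0).2 θ hθ
  have hsolc : Continuous (sol a b τ φ) := by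
    rw [continuous_iff_continuousAt]
    intro t
    obtain ⟨n, hn⟩ := exists_nat_gt (t / τ 0)
    have htn : t < (n:ℝ) * τ 0 := by
      rw [div_lt_iff₀ hτ0] at hn; linarith [hn]
    refine ((hseq n).1.continuousAt).congr ?_
    refine Filter.eventuallyEq_of_mem (Iio_mem_nhds htn) ?_
    intro s hs
    exact (hsol_eq n s (le_of_lt hs)).symm
  have hsolb := hbound _ hsolc hsol0
  have hsolF : Continuous (picF b τ (sol a b τ φ)) := hpicFc _ hsolc hsolb
  -- the fixed-point (variation of constants) formula
  have hfix : ∀ t : ℝ, 0 ≤ t → sol a b τ φ t = Real.exp (a * t) *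
      (φ 0 + ∫ s in (0:ℝ)..t, Real.exp (-(a * s)) * picF b τ (sol a b τ φ) s) := by
    intro t ht
    set n := ⌈t / τ 0⌉₊ with hn
    have h1 : sol a b τ φ t = picSeq a b τ φ (n + 1) t := by
      refine hsol_eq (n + 1) t (le_trans (hceil t) ?_)
      push_cast
      nlinarith [hτ0.le]
    rcases eq_or_lt_of_le ht with h0 | h0
    · rw [← h0]
      simp only [intervalIntegral.integral_same, mul_zero, Real.exp_zero, add_zero, one_mul]
      exact hsol0 0 le_rfl
    · rw [h1]
      show pic a b τ φ (picSeq a b τ φ n) t = _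
      rw [pic, if_neg (not_le.2 h0)]
      have hint : (∫ s in (0:ℝ)..t, Real.exp (-(a * s)) * picF b τ (picSeq a b τ φ n) s)
          = ∫ s in (0:ℝ)..t, Real.exp (-(a * s)) * picF b τ (sol a b τ φ) s := by
        refine intervalIntegral.integral_congr fun s hs => ?_
        rw [Set.uIcc_of_le h0.le] at hs
        congr 1
        refine tsum_congr fun i => ?_
        congr 1
        refine (hsol_eq n (s - τ i) ?_).symm
        have h1 : s ≤ t := hs.2
        have h2 : τ 0 ≤ τ i := hτge i
        have h3 := hceil t
        linarith
      rw [hint]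
  -- the derivative of the solution
  have hderiv : ∀ t ≥ (0:ℝ), HasDerivWithinAt (sol a b τ φ)
      (a * sol a b τ φ t + ∑' i, b i * sol a b τ φ (t - τ i)) (Set.Ici 0) t := by
    intro t ht
    have hint : Continuous fun s : ℝ => Real.exp (-(a * s)) * picF b τ (sol a b τ φ) s :=
      (Real.continuous_exp.comp (continuous_const.mul continuous_id).neg).mul hsolF
    have hG : HasDerivAt (fun u : ℝ => ∫ s in (0:ℝ)..u,
        Real.exp (-(a * s)) * picF b τ (sol a b τ φ) s)
        (Real.exp (-(a * t)) * picF b τ (sol a b τ φ) t) t :=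
      intervalIntegral.integral_hasDerivAt_right (hint.intervalIntegrable 0 t)
        (hint.stronglyMeasurableAtFilter _ _) hint.continuousAt
    have he : HasDerivAt (fun u : ℝ => Real.exp (a * u)) (Real.exp (a * t) * a) t := by
      simpa [Function.comp_def] using (Real.hasDerivAt_exp (a * t)).comp t ((hasDerivAt_id t).const_mul a)
    have hh := he.mul (hG.const_add (φ 0))
    have hval : Real.exp (a * t) * a * (φ 0 + ∫ s in (0:ℝ)..t,
          Real.exp (-(a * s)) * picF b τ (sol a b τ φ) s)
        + Real.exp (a * t) * (Real.exp (-(a * t)) * picF b τ (sol a b τ φ) t)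
        = a * sol a b τ φ t + ∑' i, b i * sol a b τ φ (t - τ i) := by
      rw [← picF_apply]
      have hee : Real.exp (a * t) * Real.exp (-(a * t)) = 1 := by
        rw [← Real.exp_add]; simp
      rw [hfix t ht]
      calc Real.exp (a * t) * a * (φ 0 + ∫ s in (0:ℝ)..t,
            Real.exp (-(a * s)) * picF b τ (sol a b τ φ) s)
          + Real.exp (a * t) * (Real.exp (-(a * t)) * picF b τ (sol a b τ φ) t)
          = a * (Real.exp (a * t) * (φ 0 + ∫ s in (0:ℝ)..t,
            Real.exp (-(a * s)) * picF b τ (sol a b τ φ) s))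
          + (Real.exp (a * t) * Real.exp (-(a * t))) * picF b τ (sol a b τ φ) t := by ring
        _ = _ := by rw [hee, one_mul]
    rw [← hval]
    exact (hh.hasDerivWithinAt).congr (fun s hs => hfix s hs) (hfix t ht)
  -- assemble existence and uniqueness
  refine ⟨sol a b τ φ, ⟨hsolc, hsol0, fun t _ => hsumm _ hsolb t, hderiv, ?_⟩, ?_⟩
  · have : Continuous fun t => a * sol a b τ φ t + picF b τ (sol a b τ φ) t :=
      (continuous_const.mul hsolc).add hsolF
    exact this.continuousOn
  · rintro y ⟨hyc, hy0, hysum, hyd, -⟩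
    have key : ∀ n : ℕ, ∀ t ≤ (n:ℝ) * τ 0, y t = sol a b τ φ t := by
      intro n
      induction n with
      | zero =>
        intro t ht
        norm_num at ht
        rw [hy0 t ht, hsol0 t ht]
      | succ n ih =>
        intro t ht
        set A := (n:ℝ) * τ 0 with hA
        set B := ((n:ℕ) + 1 : ℝ) * τ 0 with hB
        have hA0 : (0:ℝ) ≤ A := by positivity
        have hAB : A ≤ B := by
          rw [hA, hB]; nlinarith [hτ0.le]
        have hz : ∀ s ∈ Set.Icc A B, ‖y s - sol a b τ φ s‖ ≤
            gronwallBound 0 |a| 0 (s - A) := by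
          refine norm_le_gronwallBound_of_norm_deriv_right_le
            (f' := fun s => a * (y s - sol a b τ φ s))
            ((hyc.sub hsolc).continuousOn) ?_ ?_ ?_
          · intro s hs
            have hs0 : (0:ℝ) ≤ s := le_trans hA0 hs.1
            have h1 := hyd s hs0
            have h2 := hderiv s hs0
            have heq : ∑' i, b i * y (s - τ i) = ∑' i, b i * sol a b τ φ (s - τ i) := by
              refine tsum_congr fun i => ?_
              congr 1
              refine ih (s - τ i) ?_
              have h3 : τ 0 ≤ τ i := hτge i
              have h4 : s ≤ B := hs.2.le
              rw [hB] at h4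
              rw [hA]
              push_cast at h4 ⊢
              linarith
            have h3 : HasDerivWithinAt (fun u => y u - sol a b τ φ u)
                (a * (y s - sol a b τ φ s)) (Set.Ici 0) s := by
              have := h1.sub h2
              refine this.congr_deriv ?_
              rw [heq]; ring
            exact h3.mono (Set.Ici_subset_Ici.2 hs0)
          · have : y A - sol a b τ φ A = 0 := by rw [ih A le_rfl]; ring
            rw [this]; simp
          · intro s _
            rw [Real.norm_eq_abs, Real.norm_eq_abs, abs_mul, add_zero]
        rcases le_or_gt t A with h | h
        · exact ih t h
        · have htB : t ≤ B := by rw [hB]; push_cast at ht ⊢; linarith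
          have := hz t ⟨h.le, htB⟩
          rw [gronwallBound_ε0, zero_mul] at this
          have h0 : y t - sol a b τ φ t = 0 := by
            have := le_antisymm this (norm_nonneg _)
            exact norm_eq_zero.1 this
          linarith [h0]
    funext t
    obtain ⟨n, hn⟩ := exists_nat_gt (t / τ 0)
    refine key n t ?_
    rw [div_lt_iff₀ hτ0] at hn
    linarith
end

section
/- Let {b_i} be an arbitrary real sequence and {τ_i} strictly increasing positive reals with τ_i → ∞. For k ∈ ℕ let n(k) be the smallest positive integer such that τ_i ≥ kτ₁ for all i ≥ n(k), and define seminorms p_k(φ) = Σ_{i=n(k)}^∞ sup_{s∈[0,kτ₁]} |b_i φ(s − τ_i)| and ‖φ‖_k = sup_{θ∈[−k,0]} |φ(θ)| on F = {φ ∈ C(-∞,0] : p_k(φ) < ∞ for all k}. Then F with the topology generated by {‖·‖_k} ∪ {p_k} is a Fréchet space (in particular, complete). -/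
open Filter Set

/-- sup_{s ∈ [0, kτ₁]} |b_i φ(s − τ_i)|  (τ₁ = τ 0 with ℕ-indexing). -/
noncomputable def pTerm (b τ : ℕ → ℝ) (φ : ℝ → ℝ) (k i : ℕ) : ℝ :=
  ⨆ s : Set.Icc (0:ℝ) ((k : ℝ) * τ 0), |b i * φ ((s : ℝ) - τ i)|

/-- The seminorm p_k(φ) = Σ_{i ≥ n(k)} sup_{s ∈ [0,kτ₁]} |b_i φ(s − τ_i)|. -/
noncomputable def pSemi (b τ : ℕ → ℝ) (n : ℕ → ℕ) (φ : ℝ → ℝ) (k : ℕ) : ℝ :=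
  ∑' i : ℕ, pTerm b τ φ k (n k + i)

/-- The seminorm ‖φ‖_k = sup_{θ ∈ [−k,0]} |φ(θ)|. -/
noncomputable def normSemi (φ : ℝ → ℝ) (k : ℕ) : ℝ :=
  ⨆ θ : Set.Icc (-(k:ℝ)) (0:ℝ), |φ (θ : ℝ)|

/-- n(k) is the smallest natural number such that τ_i ≥ kτ₁ for all i ≥ n(k). -/
def nSpec (τ : ℕ → ℝ) (n : ℕ → ℕ) : Prop :=
  ∀ k : ℕ, (∀ i, n k ≤ i → (k : ℝ) * τ 0 ≤ τ i) ∧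
    ∀ m : ℕ, (∀ i, m ≤ i → (k : ℝ) * τ 0 ≤ τ i) → n k ≤ m

/-- Membership in the Fréchet space F: φ is continuous on (-∞,0] and
p_k(φ) < ∞ (i.e. the defining series is summable) for every k. -/
def memF (b τ : ℕ → ℝ) (n : ℕ → ℕ) (φ : ℝ → ℝ) : Prop :=
  ContinuousOn φ (Set.Iic 0) ∧
    ∀ k : ℕ, Summable fun i => pTerm b τ φ k (n k + i)
-- auxiliary lemmas (added)
lemma pTerm_nonneg (b τ : ℕ → ℝ) (φ : ℝ → ℝ) (k i : ℕ) : 0 ≤ pTerm b τ φ k i :=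
  Real.iSup_nonneg fun _ => abs_nonneg _

lemma normSemi_nonneg (φ : ℝ → ℝ) (k : ℕ) : 0 ≤ normSemi φ k :=
  Real.iSup_nonneg fun _ => abs_nonneg _

lemma bddAbove_norm {f : ℝ → ℝ} (hf : ContinuousOn f (Iic 0)) (k : ℕ) :
    BddAbove (range fun θ : Icc (-(k:ℝ)) (0:ℝ) => |f (θ:ℝ)|) := by
  have h1 : ContinuousOn (fun θ => |f θ|) (Icc (-(k:ℝ)) 0) :=
    (hf.mono Icc_subset_Iic_self).abs
  have h2 := (isCompact_Icc.image_of_continuousOn h1).bddAbove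
  rwa [Set.image_eq_range] at h2

lemma le_normSemi {f : ℝ → ℝ} {k : ℕ} (hf : ContinuousOn f (Iic 0))
    {θ : ℝ} (hθ : θ ∈ Icc (-(k:ℝ)) (0:ℝ)) : |f θ| ≤ normSemi f k :=
  le_ciSup (bddAbove_norm hf k) (⟨θ, hθ⟩ : Icc (-(k:ℝ)) (0:ℝ))

lemma bddAbove_pTerm {b τ : ℕ → ℝ} {f : ℝ → ℝ} (hf : ContinuousOn f (Iic 0))
    {k i : ℕ} (hi : (k:ℝ) * τ 0 ≤ τ i) :
    BddAbove (range fun s : Icc (0:ℝ) ((k:ℝ) * τ 0) => |b i * f ((s:ℝ) - τ i)|) := by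
  have hmap : MapsTo (fun s : ℝ => s - τ i) (Icc (0:ℝ) ((k:ℝ) * τ 0)) (Iic 0) := by
    intro s hs
    simp only [mem_Iic]
    linarith [hs.2]
  have h1 : ContinuousOn (fun s : ℝ => |b i * f (s - τ i)|) (Icc 0 ((k:ℝ) * τ 0)) := by
    apply ContinuousOn.abs
    exact continuousOn_const.mul (hf.comp (continuousOn_id.sub continuousOn_const) hmap)
  have h2 := (isCompact_Icc.image_of_continuousOn h1).bddAbove
  rwa [Set.image_eq_range] at h2

/-- three-term triangle inequality for pTerm -/
lemma pTerm_tri {b τ : ℕ → ℝ} {f g h : ℝ → ℝ} (hfgh : ∀ x, x ≤ 0 → f x = g x + h x)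
    (hg : ContinuousOn g (Iic 0)) (hh : ContinuousOn h (Iic 0))
    {k i : ℕ} (hi : (k:ℝ) * τ 0 ≤ τ i) :
    pTerm b τ f k i ≤ pTerm b τ g k i + pTerm b τ h k i := by
  refine Real.iSup_le (fun s => ?_) (add_nonneg (pTerm_nonneg b τ g k i) (pTerm_nonneg b τ h k i))
  have hx : (s:ℝ) - τ i ≤ 0 := by linarith [s.2.2]
  calc |b i * f ((s:ℝ) - τ i)|
      = |b i * g ((s:ℝ) - τ i) + b i * h ((s:ℝ) - τ i)| := by rw [hfgh _ hx]; ring_nf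
    _ ≤ |b i * g ((s:ℝ) - τ i)| + |b i * h ((s:ℝ) - τ i)| := abs_add_le _ _
    _ ≤ pTerm b τ g k i + pTerm b τ h k i :=
        add_le_add (le_ciSup (bddAbove_pTerm hg hi) s) (le_ciSup (bddAbove_pTerm hh hi) s)

lemma pTerm_sub_le {b τ : ℕ → ℝ} {f g : ℝ → ℝ}
    (hf : ContinuousOn f (Iic 0)) (hg : ContinuousOn g (Iic 0))
    {k i : ℕ} (hi : (k:ℝ) * τ 0 ≤ τ i) :
    pTerm b τ (fun θ => f θ - g θ) k i ≤ pTerm b τ f k i + pTerm b τ g k i := by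
  refine Real.iSup_le (fun s => ?_) (add_nonneg (pTerm_nonneg b τ f k i) (pTerm_nonneg b τ g k i))
  calc |b i * (f ((s:ℝ) - τ i) - g ((s:ℝ) - τ i))|
      = |b i * f ((s:ℝ) - τ i) - b i * g ((s:ℝ) - τ i)| := by ring_nf
    _ ≤ |b i * f ((s:ℝ) - τ i)| + |b i * g ((s:ℝ) - τ i)| := abs_sub _ _
    _ ≤ pTerm b τ f k i + pTerm b τ g k i :=
        add_le_add (le_ciSup (bddAbove_pTerm hf hi) s) (le_ciSup (bddAbove_pTerm hg hi) s)

lemma pTerm_sub_comm (b τ : ℕ → ℝ) (f g : ℝ → ℝ) (k i : ℕ) :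
    pTerm b τ (fun θ => f θ - g θ) k i = pTerm b τ (fun θ => g θ - f θ) k i := by
  unfold pTerm
  congr 1
  funext s
  rw [show b i * (f ((s:ℝ) - τ i) - g ((s:ℝ) - τ i))
      = -(b i * (g ((s:ℝ) - τ i) - f ((s:ℝ) - τ i))) by ring, abs_neg]

lemma pTerm_small {b τ : ℕ → ℝ} {f : ℝ → ℝ} {k i m : ℕ} {δ : ℝ} (hδ : 0 ≤ δ)
    (hi : (k:ℝ) * τ 0 ≤ τ i) (him : τ i ≤ (m:ℝ))
    (hb : ∀ θ ∈ Icc (-(m:ℝ)) (0:ℝ), |f θ| ≤ δ) :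
    pTerm b τ f k i ≤ |b i| * δ := by
  refine Real.iSup_le (fun s => ?_) (mul_nonneg (abs_nonneg _) hδ)
  rw [abs_mul]
  refine mul_le_mul_of_nonneg_left (hb _ ⟨?_, ?_⟩) (abs_nonneg _)
  · linarith [s.2.1]
  · linarith [s.2.2]

/-- F with the seminorms {‖·‖_k} ∪ {p_k} is a Fréchet space; the key
point is completeness: every sequence in F that is Cauchy with respect to every
seminorm converges in every seminorm to an element of F. -/
theorem F_is_complete (b τ : ℕ → ℝ) (n : ℕ → ℕ)
    (hτ : StrictMono τ) (hτpos : ∀ i, 0 < τ i)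
    (hτtop : Tendsto τ atTop atTop) (hn : nSpec τ n)
    (φ : ℕ → ℝ → ℝ) (hmem : ∀ j, memF b τ n (φ j))
    (hcauchy : ∀ k : ℕ, ∀ ε > (0:ℝ), ∃ N : ℕ, ∀ j ≥ N, ∀ j' ≥ N,
      normSemi (fun θ => φ j θ - φ j' θ) k ≤ ε ∧
      pSemi b τ n (fun θ => φ j θ - φ j' θ) k ≤ ε) :
    ∃ ψ : ℝ → ℝ, memF b τ n ψ ∧ ∀ k : ℕ,
      Tendsto (fun j => normSemi (fun θ => φ j θ - ψ θ) k) atTop (nhds 0) ∧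
      Tendsto (fun j => pSemi b τ n (fun θ => φ j θ - ψ θ) k) atTop (nhds 0) := by
  have hcont : ∀ j, ContinuousOn (φ j) (Iic 0) := fun j => (hmem j).1
  have hkτ : ∀ (k i : ℕ), (k:ℝ) * τ 0 ≤ τ (n k + i) := fun k i => (hn k).1 _ (Nat.le_add_right _ _)
  -- Step 1: pointwise Cauchy on Iic 0
  have hptCauchy : ∀ θ : ℝ, θ ≤ 0 → CauchySeq (fun j => φ j θ) := by
    intro θ hθ
    rw [Metric.cauchySeq_iff]
    intro ε hε
    have hθk : θ ∈ Icc (-((⌈-θ⌉₊ : ℕ):ℝ)) (0:ℝ) := by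
      constructor
      · have := Nat.le_ceil (-θ); linarith
      · exact hθ
    obtain ⟨N, hN⟩ := hcauchy ⌈-θ⌉₊ (ε/2) (by linarith)
    refine ⟨N, fun j hj j' hj' => ?_⟩
    have h1 := (hN j hj j' hj').1
    have h2 := le_normSemi ((hcont j).sub (hcont j')) hθk
    calc dist (φ j θ) (φ j' θ) = |φ j θ - φ j' θ| := Real.dist_eq _ _
      _ ≤ normSemi (fun x => φ j x - φ j' x) ⌈-θ⌉₊ := h2
      _ ≤ ε/2 := h1
      _ < ε := by linarith
  -- Step 2: define limit ψ
  have hex : ∀ θ : ℝ, ∃ l : ℝ, θ ≤ 0 → Tendsto (fun j => φ j θ) atTop (nhds l) := by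
    intro θ
    by_cases h : θ ≤ 0
    · obtain ⟨l, hl⟩ := cauchySeq_tendsto_of_complete (hptCauchy θ h)
      exact ⟨l, fun _ => hl⟩
    · exact ⟨0, fun h' => absurd h' h⟩
  choose ψ hψ using hex
  -- Step 3: uniform convergence on [-k,0]
  have hunif : ∀ k : ℕ, ∀ ε > (0:ℝ), ∃ N, ∀ j ≥ N, ∀ θ ∈ Icc (-(k:ℝ)) (0:ℝ),
      |φ j θ - ψ θ| ≤ ε := by
    intro k ε hε
    obtain ⟨N, hN⟩ := hcauchy k ε hε
    refine ⟨N, fun j hj θ hθ => ?_⟩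
    have hlim : Tendsto (fun j' => |φ j θ - φ j' θ|) atTop (nhds |φ j θ - ψ θ|) :=
      (tendsto_const_nhds.sub (hψ θ hθ.2)).abs
    refine le_of_tendsto hlim (eventually_atTop.2 ⟨N, fun j' hj' => ?_⟩)
    exact (le_normSemi ((hcont j).sub (hcont j')) hθ).trans (hN j hj j' hj').1
  -- Step 4: ψ is continuous on Iic 0
  have hψcont : ContinuousOn ψ (Iic 0) := by
    intro x hx
    have hx0 : x ≤ 0 := hx
    set k : ℕ := ⌈-x⌉₊ + 1 with hk
    have hclt : -(k:ℝ) < x := by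
      have := Nat.le_ceil (-x)
      have : (⌈-x⌉₊:ℝ) < (k:ℝ) := by rw [hk]; push_cast; linarith
      have h2 := Nat.le_ceil (-x)
      linarith
    have hTU : TendstoUniformlyOn (fun j θ => φ j θ) ψ atTop (Icc (-(k:ℝ)) 0) := by
      rw [Metric.tendstoUniformlyOn_iff]
      intro ε hε
      obtain ⟨N, hN⟩ := hunif k (ε/2) (by linarith)
      refine eventually_atTop.2 ⟨N, fun j hj θ hθ => ?_⟩
      calc dist (ψ θ) (φ j θ) = |φ j θ - ψ θ| := by rw [Real.dist_eq, abs_sub_comm]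
        _ ≤ ε/2 := hN j hj θ hθ
        _ < ε := by linarith
    have hcont' : ContinuousOn ψ (Icc (-(k:ℝ)) 0) :=
      hTU.continuousOn (Eventually.of_forall fun j => (hcont j).mono Icc_subset_Iic_self).frequently
    have hmemnhds : Icc (-(k:ℝ)) 0 ∈ nhdsWithin x (Iic 0) := by
      refine mem_nhdsWithin.2 ⟨Ioi (-(k:ℝ)), isOpen_Ioi, hclt, ?_⟩
      rintro y ⟨hy1, hy2⟩
      exact ⟨le_of_lt hy1, hy2⟩
    exact (hcont' x ⟨hclt.le, hx0⟩).mono_of_mem_nhdsWithin hmemnhds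
  -- Step 5: normSemi convergence
  have hnormle : ∀ k, ∀ ε > (0:ℝ), ∃ N, ∀ j ≥ N,
      normSemi (fun θ => φ j θ - ψ θ) k ≤ ε := by
    intro k ε hε
    obtain ⟨N, hN⟩ := hunif k ε hε
    exact ⟨N, fun j hj => Real.iSup_le (fun θ => hN j hj θ θ.2) hε.le⟩
  have hnormtend : ∀ k, Tendsto (fun j => normSemi (fun θ => φ j θ - ψ θ) k) atTop (nhds 0) := by
    intro k
    rw [Metric.tendsto_atTop]
    intro ε hε
    obtain ⟨N, hN⟩ := hnormle k (ε/2) (by linarith)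
    refine ⟨N, fun j hj => ?_⟩
    rw [Real.dist_eq, sub_zero, abs_of_nonneg (normSemi_nonneg _ _)]
    linarith [hN j hj]
  -- Step 6: key partial-sum bound for pSemi
  have hkey : ∀ k : ℕ, ∀ ε : ℝ, 0 < ε → ∃ N, ∀ j ≥ N, ∀ M : ℕ,
      ∑ i ∈ Finset.range M, pTerm b τ (fun θ => φ j θ - ψ θ) k (n k + i) ≤ ε := by
    intro k ε hε
    obtain ⟨N, hN⟩ := hcauchy k ε hε
    refine ⟨N, fun j hj M => ?_⟩
    refine le_of_forall_pos_le_add fun δ hδ => ?_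
    set m : ℕ := ⌈τ (n k + M)⌉₊ with hm
    set C : ℝ := ∑ i ∈ Finset.range M, |b (n k + i)| with hC
    have hC0 : 0 ≤ C := Finset.sum_nonneg fun _ _ => abs_nonneg _
    have hδ' : 0 < δ / (C + 1) := by positivity
    obtain ⟨N', hN'⟩ := hunif m (δ/(C+1)) hδ'
    set j' : ℕ := max N N' with hj'
    have hj'1 : N ≤ j' := le_max_left _ _
    have hj'2 : N' ≤ j' := le_max_right _ _
    have hψsub : ContinuousOn (fun θ => φ j' θ - ψ θ) (Iic 0) := (hcont j').sub hψcont
    have hterm : ∀ i ∈ Finset.range M,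
        pTerm b τ (fun θ => φ j θ - ψ θ) k (n k + i) ≤
        pTerm b τ (fun θ => φ j θ - φ j' θ) k (n k + i) + |b (n k + i)| * (δ/(C+1)) := by
      intro i hi
      have h1 : pTerm b τ (fun θ => φ j θ - ψ θ) k (n k + i) ≤
          pTerm b τ (fun θ => φ j θ - φ j' θ) k (n k + i) +
          pTerm b τ (fun θ => φ j' θ - ψ θ) k (n k + i) :=
        pTerm_tri (fun x _ => by simp only [Pi.sub_apply]; ring) ((hcont j).sub (hcont j')) hψsub (hkτ k i)
      have hτle : τ (n k + i) ≤ (m:ℝ) := by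
        have h2 : τ (n k + i) ≤ τ (n k + M) :=
          hτ.monotone (Nat.add_le_add_left (Nat.le_of_lt (Finset.mem_range.1 hi)) _)
        exact h2.trans (Nat.le_ceil _)
      have h3 : pTerm b τ (fun θ => φ j' θ - ψ θ) k (n k + i) ≤
          |b (n k + i)| * (δ/(C+1)) :=
        pTerm_small hδ'.le (hkτ k i) hτle (fun θ hθ => hN' j' hj'2 θ hθ)
      linarith
    have hsumjj' : Summable fun i => pTerm b τ (fun θ => φ j θ - φ j' θ) k (n k + i) := by
      refine Summable.of_nonneg_of_le (fun i => pTerm_nonneg _ _ _ _ _)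
        (fun i => pTerm_sub_le (hcont j) (hcont j') (hkτ k i)) ?_
      exact ((hmem j).2 k).add ((hmem j').2 k)
    have h4 : ∑ i ∈ Finset.range M, pTerm b τ (fun θ => φ j θ - φ j' θ) k (n k + i) ≤ ε := by
      refine le_trans (hsumjj'.sum_le_tsum _ (fun i _ => pTerm_nonneg _ _ _ _ _)) ?_
      exact (hN j hj j' hj'1).2
    have h5 : ∑ i ∈ Finset.range M, |b (n k + i)| * (δ/(C+1)) ≤ δ := by
      rw [← Finset.sum_mul, ← hC]
      calc C * (δ/(C+1)) ≤ (C+1) * (δ/(C+1)) := by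
            apply mul_le_mul_of_nonneg_right (by linarith) hδ'.le
        _ = δ := by field_simp
    calc ∑ i ∈ Finset.range M, pTerm b τ (fun θ => φ j θ - ψ θ) k (n k + i)
        ≤ ∑ i ∈ Finset.range M, (pTerm b τ (fun θ => φ j θ - φ j' θ) k (n k + i)
            + |b (n k + i)| * (δ/(C+1))) := Finset.sum_le_sum hterm
      _ = ∑ i ∈ Finset.range M, pTerm b τ (fun θ => φ j θ - φ j' θ) k (n k + i)
            + ∑ i ∈ Finset.range M, |b (n k + i)| * (δ/(C+1)) := Finset.sum_add_distrib
      _ ≤ ε + δ := add_le_add h4 h5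
  -- Step 7: ψ ∈ F
  have hmemψ : memF b τ n ψ := by
    refine ⟨hψcont, fun k => ?_⟩
    obtain ⟨N, hN⟩ := hkey k 1 one_pos
    have hsumd : Summable fun i => pTerm b τ (fun θ => φ N θ - ψ θ) k (n k + i) :=
      summable_of_sum_range_le (fun i => pTerm_nonneg _ _ _ _ _) (hN N le_rfl)
    have hsumd' : Summable fun i => pTerm b τ (fun θ => ψ θ - φ N θ) k (n k + i) := by
      have heq : (fun i => pTerm b τ (fun θ => φ N θ - ψ θ) k (n k + i)) =
          fun i => pTerm b τ (fun θ => ψ θ - φ N θ) k (n k + i) :=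
        funext fun i => pTerm_sub_comm b τ _ _ k (n k + i)
      rwa [heq] at hsumd
    refine Summable.of_nonneg_of_le (fun i => pTerm_nonneg _ _ _ _ _)
      (fun i => pTerm_tri (f := ψ) (g := φ N) (h := fun θ => ψ θ - φ N θ)
        (fun x _ => by ring) (hcont N) (hψcont.sub (hcont N)) (hkτ k i)) ?_
    exact ((hmem N).2 k).add hsumd'
  -- Step 8: pSemi convergence
  have hptend : ∀ k, Tendsto (fun j => pSemi b τ n (fun θ => φ j θ - ψ θ) k) atTop (nhds 0) := by
    intro k
    rw [Metric.tendsto_atTop]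
    intro ε hε
    obtain ⟨N, hN⟩ := hkey k (ε/2) (by linarith)
    refine ⟨N, fun j hj => ?_⟩
    have hsumd : Summable fun i => pTerm b τ (fun θ => φ j θ - ψ θ) k (n k + i) :=
      summable_of_sum_range_le (fun i => pTerm_nonneg _ _ _ _ _) (hN j hj)
    have h1 : pSemi b τ n (fun θ => φ j θ - ψ θ) k ≤ ε/2 :=
      hsumd.tsum_le_of_sum_range_le (hN j hj)
    have h2 : 0 ≤ pSemi b τ n (fun θ => φ j θ - ψ θ) k :=
      tsum_nonneg fun i => pTerm_nonneg _ _ _ _ _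
    rw [Real.dist_eq, sub_zero, abs_of_nonneg h2]
    linarith
  exact ⟨ψ, hmemψ, fun k => ⟨hnormtend k, hptend k⟩⟩
end

section
/- Let φ ∈ F. Then for each k ∈ ℕ there exist a constant C_k ≥ 0 and a finite set Λ of the seminorms {‖·‖_m} ∪ {p_m} such that the unique solution x of the infinite-delay equation satisfies sup_{s∈[0,kτ₁]} |x(s)| ≤ C_k · max{q(φ) : q ∈ Λ}. -/
open Filter Set

set_option maxHeartbeats 1000000

/-- For φ ∈ F and each k there are C_k ≥ 0 and a finite set Λ of the
seminorms {‖·‖_m} ∪ {p_m} (encoded by indices (m, true) ↦ ‖·‖_m, (m, false) ↦ p_m)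
such that the solution x satisfies sup_{[0,kτ₁]} |x| ≤ C_k · max{q(φ) : q ∈ Λ}. -/
theorem solution_seminorm_estimate (a : ℝ) (b τ : ℕ → ℝ) (n : ℕ → ℕ)
    (hτ : StrictMono τ) (hτpos : ∀ i, 0 < τ i)
    (hτtop : Tendsto τ atTop atTop) (hn : nSpec τ n)
    (φ : ℝ → ℝ) (hφ : memF b τ n φ)
    (x : ℝ → ℝ) (hx : IsSolution a b τ φ x) (k : ℕ) :
    ∃ C : ℝ, 0 ≤ C ∧ ∃ (Λ : Finset (ℕ × Bool)) (hΛ : Λ.Nonempty),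
      ∀ s ∈ Set.Icc (0:ℝ) ((k : ℝ) * τ 0),
        |x s| ≤ C * Λ.sup' hΛ (fun q =>
          if q.2 then normSemi φ q.1 else pSemi b τ n φ q.1) := by
  obtain ⟨hxcont, hxφ, hxsum, hxderiv, hFcont⟩ := hx
  set T : ℝ := (k : ℝ) * τ 0 with hTdef
  have hT0 : (0:ℝ) ≤ T := mul_nonneg (Nat.cast_nonneg k) (hτpos 0).le
  set N : ℕ := n k with hNdef
  set m₀ : ℕ := ⌈τ N⌉₊ with hm₀def
  have hτN : ∀ i, N ≤ i → T ≤ τ i := (hn k).1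
  have hτm₀ : ∀ i, i ≤ N → τ i ≤ (m₀ : ℝ) :=
    fun i hi => le_trans (hτ.monotone hi) (Nat.le_ceil _)
  set Qn : ℝ := normSemi φ m₀ with hQndef
  set Qp : ℝ := pSemi b τ n φ k with hQpdef
  set Q : ℝ := max Qn Qp with hQdef
  -- boundedness facts
  have hQn_bd : ∀ θ ∈ Set.Icc (-(m₀:ℝ)) 0, |φ θ| ≤ Qn := by
    intro θ hθ
    have hcont : ContinuousOn (fun θ => |φ θ|) (Set.Icc (-(m₀:ℝ)) 0) :=
      (hφ.1.mono Set.Icc_subset_Iic_self).abs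
    have hbd : BddAbove (Set.range fun θ : Set.Icc (-(m₀:ℝ)) 0 => |φ (θ:ℝ)|) := by
      rw [show (fun θ : Set.Icc (-(m₀:ℝ)) 0 => |φ (θ:ℝ)|)
          = (Set.Icc (-(m₀:ℝ)) 0).domRestrict (fun θ => |φ θ|) from rfl, Set.range_restrict]
      exact (isCompact_Icc.image_of_continuousOn hcont).bddAbove
    exact le_ciSup hbd (⟨θ, hθ⟩ : Set.Icc (-(m₀:ℝ)) 0)
  have hpT : ∀ i, N ≤ i → ∀ s ∈ Set.Icc (0:ℝ) T, |b i * φ (s - τ i)| ≤ pTerm b τ φ k i := by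
    intro i hi s hs
    have hmaps : Set.MapsTo (fun s : ℝ => s - τ i) (Set.Icc (0:ℝ) T) (Set.Iic 0) := by
      intro u hu
      have := hτN i hi
      simp only [Set.mem_Iic]
      linarith [hu.2]
    have hcont : ContinuousOn (fun s : ℝ => |b i * φ (s - τ i)|) (Set.Icc (0:ℝ) T) :=
      (continuousOn_const.mul
        (hφ.1.comp (continuous_sub_right (τ i)).continuousOn hmaps)).abs
    have hbd : BddAbove
        (Set.range fun s : Set.Icc (0:ℝ) T => |b i * φ ((s:ℝ) - τ i)|) := by
      rw [show (fun s : Set.Icc (0:ℝ) T => |b i * φ ((s:ℝ) - τ i)|)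
          = (Set.Icc (0:ℝ) T).domRestrict (fun s => |b i * φ (s - τ i)|) from rfl,
        Set.range_restrict]
      exact (isCompact_Icc.image_of_continuousOn hcont).bddAbove
    exact le_ciSup hbd (⟨s, hs⟩ : Set.Icc (0:ℝ) T)
  have hpT0 : ∀ i, 0 ≤ pTerm b τ φ k i := fun i => Real.iSup_nonneg (fun s => abs_nonneg _)
  have hQn0 : 0 ≤ Qn := Real.iSup_nonneg (fun θ => abs_nonneg _)
  have hQp0 : 0 ≤ Qp := tsum_nonneg (fun i => hpT0 _)
  have hQ0 : 0 ≤ Q := le_trans hQn0 (le_max_left _ _)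
  have hx0 : |x 0| ≤ Qn := by
    rw [hxφ 0 le_rfl]
    exact hQn_bd 0 ⟨by linarith [Nat.cast_nonneg (α := ℝ) m₀], le_rfl⟩
  -- tail estimate
  have htail : ∀ t ∈ Set.Icc (0:ℝ) T, |∑' i, b (i + N) * x (t - τ (i + N))| ≤ Qp := by
    intro t ht
    have hle : ∀ i : ℕ, t - τ (i + N) ≤ 0 := by
      intro i
      have := hτN (i + N) (Nat.le_add_left _ _)
      linarith [ht.2]
    have heq : ∀ i : ℕ, |b (i + N) * x (t - τ (i + N))| ≤ pTerm b τ φ k (N + i) := by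
      intro i
      rw [add_comm i N, hxφ _ (by rw [add_comm N i]; exact hle i)]
      exact hpT (N + i) (Nat.le_add_right _ _) t ht
    have habs : Summable fun i => |b (i + N) * x (t - τ (i + N))| :=
      Summable.of_nonneg_of_le (fun i => abs_nonneg _) heq (hφ.2 k)
    have habs' : Summable fun i => ‖b (i + N) * x (t - τ (i + N))‖ := by
      simpa only [Real.norm_eq_abs] using habs
    have hnorm := norm_tsum_le_tsum_norm habs'
    simp only [Real.norm_eq_abs] at hnorm
    calc |∑' i, b (i + N) * x (t - τ (i + N))|
        ≤ ∑' i, |b (i + N) * x (t - τ (i + N))| := hnorm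
      _ ≤ ∑' i, pTerm b τ φ k (N + i) := Summable.tsum_le_tsum heq habs (hφ.2 k)
      _ = Qp := rfl
  set B : ℝ := ∑ i ∈ Finset.range N, |b i| with hBdef
  have hB0 : 0 ≤ B := Finset.sum_nonneg (fun i _ => abs_nonneg _)
  -- main induction
  have main : ∀ j : ℕ, ∃ C : ℝ, 0 ≤ C ∧
      ∀ s ∈ Set.Icc (0:ℝ) T, s ≤ (j:ℝ) * τ 0 → |x s| ≤ C * Q := by
    intro j
    induction j with
    | zero =>
      refine ⟨1, zero_le_one, fun s hs hs0 => ?_⟩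
      have : s = 0 := le_antisymm (by simpa using hs0) hs.1
      rw [this, one_mul]
      exact hx0.trans (le_max_left _ _)
    | succ j ih =>
      obtain ⟨C, hC0, hC⟩ := ih
      set K : ℝ := |a| + 1 with hKdef
      have hK0 : 0 < K := by positivity
      set c : ℝ := B * max C 1 + 1 with hcdef
      have hc0 : 0 ≤ c := by positivity
      set b' : ℝ := min (((j:ℝ) + 1) * τ 0) T with hb'def
      have hb'T : b' ≤ T := min_le_right _ _
      have hbound : ∀ t ∈ Set.Ico (0:ℝ) b',
          ‖a * x t + ∑' i, b i * x (t - τ i)‖ ≤ K * ‖x t‖ + c * Q := by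
        intro t ht
        have htT : t ≤ T := le_trans ht.2.le hb'T
        have htj : t ≤ ((j:ℝ) + 1) * τ 0 := le_trans ht.2.le (min_le_left _ _)
        have hsum := hxsum t ht.1
        have hsplit : (∑' i, b i * x (t - τ i))
            = (∑ i ∈ Finset.range N, b i * x (t - τ i))
              + ∑' i, b (i + N) * x (t - τ (i + N)) :=
          (Summable.sum_add_tsum_nat_add N hsum).symm
        have hxd : ∀ i ∈ Finset.range N, |x (t - τ i)| ≤ max C 1 * Q := by
          intro i hi
          have hiN : i ≤ N := (Finset.mem_range.1 hi).le
          rcases le_or_gt (t - τ i) 0 with hneg | hpos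
          · rw [hxφ _ hneg]
            have : |φ (t - τ i)| ≤ Qn := by
              refine hQn_bd _ ⟨?_, hneg⟩
              have := hτm₀ i hiN
              linarith [ht.1]
            calc |φ (t - τ i)| ≤ Q := this.trans (le_max_left _ _)
              _ = 1 * Q := (one_mul Q).symm
              _ ≤ max C 1 * Q := mul_le_mul_of_nonneg_right (le_max_right _ _) hQ0
          · have h1 : t - τ i ∈ Set.Icc (0:ℝ) T :=
              ⟨hpos.le, by linarith [hτpos i]⟩
            have h2 : t - τ i ≤ (j:ℝ) * τ 0 := by
              have := hτ.monotone (Nat.zero_le i)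
              linarith
            calc |x (t - τ i)| ≤ C * Q := hC _ h1 h2
              _ ≤ max C 1 * Q := mul_le_mul_of_nonneg_right (le_max_left _ _) hQ0
        have hhead : |∑ i ∈ Finset.range N, b i * x (t - τ i)| ≤ B * (max C 1 * Q) := by
          calc |∑ i ∈ Finset.range N, b i * x (t - τ i)|
              ≤ ∑ i ∈ Finset.range N, |b i * x (t - τ i)| := Finset.abs_sum_le_sum_abs _ _
            _ ≤ ∑ i ∈ Finset.range N, |b i| * (max C 1 * Q) := by
                refine Finset.sum_le_sum fun i hi => ?_
                rw [abs_mul]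
                exact mul_le_mul_of_nonneg_left (hxd i hi) (abs_nonneg _)
            _ = B * (max C 1 * Q) := by rw [hBdef, Finset.sum_mul]
        have htail' := htail t ⟨ht.1, htT⟩
        have hQpQ : Qp ≤ Q := le_max_right _ _
        simp only [Real.norm_eq_abs]
        calc |a * x t + ∑' i, b i * x (t - τ i)|
            ≤ |a * x t| + |∑' i, b i * x (t - τ i)| := abs_add_le _ _
          _ ≤ |a| * |x t| + (B * (max C 1 * Q) + Qp) := by
              rw [abs_mul, hsplit]
              have := (abs_add_le (∑ i ∈ Finset.range N, b i * x (t - τ i))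
                (∑' i, b (i + N) * x (t - τ (i + N)))).trans (add_le_add hhead htail')
              linarith
          _ ≤ K * |x t| + c * Q := by
              have hxt : 0 ≤ |x t| := abs_nonneg _
              rw [hKdef, hcdef]
              nlinarith
      have hgron := norm_le_gronwallBound_of_norm_deriv_right_le
        (f := x) (f' := fun t => a * x t + ∑' i, b i * x (t - τ i))
        (a := 0) (b := b') (δ := Q) (K := K) (ε := c * Q)
        (hxcont.continuousOn)
        (fun t ht => (hxderiv t ht.1).mono (Set.Ici_subset_Ici.2 ht.1))
        (by rw [Real.norm_eq_abs]; exact hx0.trans (le_max_left Qn Qp))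
        hbound
      refine ⟨Real.exp (K * T) * (1 + c / K), by positivity, fun s hs hsj => ?_⟩
      have hsb' : s ∈ Set.Icc (0:ℝ) b' := ⟨hs.1, le_min (by push_cast at hsj ⊢; linarith) hs.2⟩
      have h1 : Real.exp (K * s) ≤ Real.exp (K * T) :=
        Real.exp_le_exp.2 (mul_le_mul_of_nonneg_left hs.2 hK0.le)
      have h2 : Real.exp (K * s) - 1 ≤ Real.exp (K * T) := by linarith
      have hcK : 0 ≤ c / K := div_nonneg hc0 hK0.le
      have := hgron s hsb'
      rw [Real.norm_eq_abs, sub_zero, gronwallBound_of_K_ne_0 hK0.ne'] at this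
      have hdiv : c * Q / K = c / K * Q := by ring
      rw [hdiv] at this
      calc |x s| ≤ Q * Real.exp (K * s) + c / K * Q * (Real.exp (K * s) - 1) := this
        _ ≤ Q * Real.exp (K * T) + c / K * Q * Real.exp (K * T) := by
            have e1 : Q * Real.exp (K * s) ≤ Q * Real.exp (K * T) :=
              mul_le_mul_of_nonneg_left h1 hQ0
            have e2 : c / K * Q * (Real.exp (K * s) - 1) ≤ c / K * Q * Real.exp (K * T) :=
              mul_le_mul_of_nonneg_left h2 (mul_nonneg hcK hQ0)
            linarith
        _ = Real.exp (K * T) * (1 + c / K) * Q := by ring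
  obtain ⟨C, hC0, hC⟩ := main k
  refine ⟨C, hC0, insert (m₀, true) {(k, false)}, Finset.insert_nonempty _ _, fun s hs => ?_⟩
  have hsup : (insert ((m₀:ℕ), true) ({((k:ℕ), false)} : Finset (ℕ × Bool))).sup'
      (Finset.insert_nonempty _ _)
      (fun q => if q.2 then normSemi φ q.1 else pSemi b τ n φ q.1) = Q := by
    rw [Finset.sup'_insert (H := Finset.singleton_nonempty _), Finset.sup'_singleton]
    simp [hQdef, hQndef, hQpdef]
  rw [hsup]
  exact hC s hs hs.2
end

section
/- Let φ ∈ F, let x: ℝ → ℝ be continuous with x = φ on (-∞,0], and suppose x restricted to [0,∞) is bounded on compact intervals. Define u(t) ∈ C(-∞,0] by [u(t)](θ) = x(t+θ). Then u(t) ∈ F for every t ≥ 0; moreover for t ∈ [0, jτ₁]: ‖u(t)‖_k ≤ max(‖φ‖_k, sup_{[0,jτ₁]}|x|) and p_k(u(t)) ≤ (Σ_{i=1}^{n(k+j)} |b_i|) max(sup_{[0,jτ₁]}|x|, ‖φ‖_m) + p_{k+j}(φ) for any integer m ≥ (k+j)τ₁. -/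
set_option maxHeartbeats 1000000


open Filter Set

lemma bddAbove_range_Icc {g : ℝ → ℝ} {a c : ℝ} (hg : ContinuousOn g (Set.Icc a c)) :
    BddAbove (Set.range fun s : Set.Icc a c => g (s : ℝ)) := by
  have h := isCompact_Icc.bddAbove_image hg
  rwa [← Set.range_restrict] at h

/-- For φ ∈ F and x : ℝ → ℝ continuous with x = φ on (-∞,0],
the history segments u(t) = x(t + ·) lie in F for t ≥ 0, with the estimates
‖u(t)‖_k ≤ max(‖φ‖_k, sup_{[0,jτ₁]}|x|) and
p_k(u(t)) ≤ (Σ_{i ≤ n(k+j)} |b_i|) max(sup_{[0,jτ₁]}|x|, ‖φ‖_m) + p_{k+j}(φ)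
for t ∈ [0, jτ₁] and any integer m ≥ (k+j)τ₁. -/
theorem history_segment_in_F (b τ : ℕ → ℝ) (n : ℕ → ℕ)
    (hτ : StrictMono τ) (hτpos : ∀ i, 0 < τ i)
    (hτtop : Tendsto τ atTop atTop) (hn : nSpec τ n)
    (φ : ℝ → ℝ) (hφ : memF b τ n φ)
    (x : ℝ → ℝ) (hxc : Continuous x) (hxφ : ∀ θ ≤ (0:ℝ), x θ = φ θ)
    (j : ℕ) (t : ℝ) (ht : t ∈ Set.Icc (0:ℝ) ((j : ℝ) * τ 0)) :
    memF b τ n (fun θ => x (t + θ)) ∧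
    (∀ k : ℕ, normSemi (fun θ => x (t + θ)) k ≤
      max (normSemi φ k) (⨆ s : Set.Icc (0:ℝ) ((j : ℝ) * τ 0), |x s|)) ∧
    (∀ k m : ℕ, ((k : ℝ) + j) * τ 0 ≤ m →
      pSemi b τ n (fun θ => x (t + θ)) k ≤
        (∑ i ∈ Finset.range (n (k + j) + 1), |b i|) *
          max (⨆ s : Set.Icc (0:ℝ) ((j : ℝ) * τ 0), |x s|) (normSemi φ m) +
        pSemi b τ n φ (k + j)) := by
  obtain ⟨ht0, htj⟩ := ht
  have hτ1 : 0 < τ 0 := hτpos 0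
  have hIcc : ∀ k : ℕ, Nonempty (Set.Icc (0:ℝ) ((k:ℝ) * τ 0)) :=
    fun k => ⟨⟨0, le_refl _, by positivity⟩⟩
  have hIcc2 : ∀ k : ℕ, Nonempty (Set.Icc (-(k:ℝ)) (0:ℝ)) :=
    fun k => ⟨⟨0, by simp, le_refl _⟩⟩
  have bddX : BddAbove (Set.range fun s : Set.Icc (0:ℝ) ((j:ℝ) * τ 0) => |x (s:ℝ)|) :=
    bddAbove_range_Icc hxc.abs.continuousOn
  have supX0 : (0:ℝ) ≤ ⨆ s : Set.Icc (0:ℝ) ((j:ℝ) * τ 0), |x (s:ℝ)| :=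
    Real.iSup_nonneg fun _ => abs_nonneg _
  have hφc : ∀ (k i : ℕ), ((k:ℝ) * τ 0 ≤ τ i) →
      BddAbove (Set.range fun s : Set.Icc (0:ℝ) ((k:ℝ) * τ 0) => |b i * φ ((s:ℝ) - τ i)|) := by
    intro k i hi
    have hc : ContinuousOn (fun s : ℝ => φ (s - τ i)) (Set.Icc 0 ((k:ℝ) * τ 0)) :=
      hφ.1.comp (continuous_sub_right (τ i)).continuousOn
        (fun s hs => show s - τ i ≤ 0 by have := hs.2; linarith)
    exact bddAbove_range_Icc (g := fun s => |b i * φ (s - τ i)|) (continuousOn_const.mul hc).abs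
  have hφnorm : ∀ m : ℕ, BddAbove (Set.range fun θ : Set.Icc (-(m:ℝ)) (0:ℝ) => |φ (θ:ℝ)|) :=
    fun m => bddAbove_range_Icc ((hφ.1.mono Set.Icc_subset_Iic_self).abs)
  have hnmono : ∀ k : ℕ, n k ≤ n (k + j) := by
    intro k
    refine (hn k).2 _ (fun i hi => le_trans ?_ ((hn (k+j)).1 i hi))
    exact mul_le_mul_of_nonneg_right (by exact_mod_cast Nat.le_add_right k j) hτ1.le
  have hτlt : ∀ k i, i < n (k + j) → τ i < ((k + j : ℕ):ℝ) * τ 0 := by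
    intro k i hi
    by_contra hcon
    push_neg at hcon
    exact absurd ((hn (k+j)).2 i (fun i' hi' => le_trans hcon (hτ.monotone hi'))) (by omega)
  -- tail comparison
  have lemA : ∀ k i, n (k + j) ≤ i →
      pTerm b τ (fun θ => x (t + θ)) k i ≤ pTerm b τ φ (k + j) i := by
    intro k i hi
    have hτi : ((k + j : ℕ):ℝ) * τ 0 ≤ τ i := (hn (k+j)).1 i hi
    haveI := hIcc k
    apply ciSup_le
    rintro ⟨s, hs0, hsk⟩
    have hcast : ((k + j : ℕ):ℝ) * τ 0 = (k:ℝ) * τ 0 + (j:ℝ) * τ 0 := by push_cast; ring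
    have hts : t + s ∈ Set.Icc (0:ℝ) (((k + j : ℕ):ℝ) * τ 0) :=
      ⟨by linarith, by rw [hcast]; linarith⟩
    have ha : t + (s - τ i) ≤ 0 := by
      have h2 := hts.2; linarith
    have hval : (fun θ => x (t + θ)) (s - τ i) = φ ((t + s) - τ i) := by
      show x (t + (s - τ i)) = _
      rw [hxφ _ ha]; ring_nf
    calc |b i * (fun θ => x (t + θ)) (s - τ i)| = |b i * φ ((t + s) - τ i)| := by rw [hval]
      _ ≤ _ := le_ciSup (hφc (k+j) i hτi) ⟨t + s, hts⟩
  -- head comparison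
  have lemB : ∀ (k m : ℕ) i, n k ≤ i → τ i ≤ (m:ℝ) →
      pTerm b τ (fun θ => x (t + θ)) k i ≤
        |b i| * max (⨆ s : Set.Icc (0:ℝ) ((j:ℝ) * τ 0), |x (s:ℝ)|) (normSemi φ m) := by
    intro k m i hik him
    haveI := hIcc k
    apply ciSup_le
    rintro ⟨s, hs0, hsk⟩
    have hτik : (k:ℝ) * τ 0 ≤ τ i := (hn k).1 i hik
    have haj : t + (s - τ i) ≤ (j:ℝ) * τ 0 := by linarith
    show |b i * x (t + (s - τ i))| ≤ _
    rw [abs_mul]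
    refine mul_le_mul_of_nonneg_left ?_ (abs_nonneg _)
    rcases le_or_gt 0 (t + (s - τ i)) with h0 | h0
    · exact le_trans (le_ciSup bddX ⟨t + (s - τ i), h0, haj⟩) (le_max_left _ _)
    · rw [hxφ _ h0.le]
      refine le_trans ?_ (le_max_right _ _)
      exact le_ciSup (hφnorm m) ⟨t + (s - τ i), ⟨by linarith, h0.le⟩⟩
  have hsummable : ∀ k, Summable fun i => pTerm b τ (fun θ => x (t + θ)) k (n k + i) := by
    intro k
    rw [← summable_nat_add_iff (n (k+j) - n k)]
    have heq : (fun i => pTerm b τ (fun θ => x (t + θ)) k (n k + (i + (n (k+j) - n k)))) =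
        fun i => pTerm b τ (fun θ => x (t + θ)) k (n (k+j) + i) := by
      funext i; congr 1; have := hnmono k; omega
    rw [heq]
    exact Summable.of_nonneg_of_le (fun i => pTerm_nonneg _ _ _ _ _)
      (fun i => lemA k _ (Nat.le_add_right _ _)) (hφ.2 (k+j))
  refine ⟨⟨Continuous.continuousOn (by fun_prop), hsummable⟩, ?_, ?_⟩
  · intro k
    haveI := hIcc2 k
    apply ciSup_le
    rintro ⟨θ, hθ1, hθ2⟩
    show |x (t + θ)| ≤ _
    rcases le_or_gt (t + θ) 0 with h0 | h0
    · refine le_trans ?_ (le_max_left _ _)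
      rw [hxφ _ h0]
      exact le_ciSup (hφnorm k) ⟨t + θ, ⟨by linarith, h0⟩⟩
    · refine le_trans ?_ (le_max_right _ _)
      exact le_ciSup bddX ⟨t + θ, ⟨h0.le, by linarith⟩⟩
  · intro k m hm
    have hm' : ((k + j : ℕ):ℝ) * τ 0 ≤ (m:ℝ) := by push_cast at hm ⊢; linarith
    have hsum := hsummable k
    have hM0 : (0:ℝ) ≤ max (⨆ s : Set.Icc (0:ℝ) ((j:ℝ) * τ 0), |x (s:ℝ)|) (normSemi φ m) :=
      le_trans supX0 (le_max_left _ _)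
    have head : ∑ i ∈ Finset.range (n (k+j) - n k),
        pTerm b τ (fun θ => x (t + θ)) k (n k + i) ≤
        (∑ i ∈ Finset.range (n (k + j) + 1), |b i|) *
          max (⨆ s : Set.Icc (0:ℝ) ((j:ℝ) * τ 0), |x (s:ℝ)|) (normSemi φ m) := by
      calc ∑ i ∈ Finset.range (n (k+j) - n k), pTerm b τ (fun θ => x (t + θ)) k (n k + i)
          ≤ ∑ i ∈ Finset.range (n (k+j) - n k), |b (n k + i)| *
              max (⨆ s : Set.Icc (0:ℝ) ((j:ℝ) * τ 0), |x (s:ℝ)|) (normSemi φ m) := by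
            apply Finset.sum_le_sum
            intro i hi
            apply lemB k m (n k + i) (Nat.le_add_right _ _)
            have hlt : n k + i < n (k + j) := by
              have := Finset.mem_range.1 hi; omega
            exact le_trans (hτlt k _ hlt).le hm'
        _ = (∑ i ∈ Finset.range (n (k+j) - n k), |b (n k + i)|) *
              max (⨆ s : Set.Icc (0:ℝ) ((j:ℝ) * τ 0), |x (s:ℝ)|) (normSemi φ m) := by
            rw [Finset.sum_mul]
        _ ≤ _ := by
            refine mul_le_mul_of_nonneg_right ?_ hM0
            rw [show ∑ i ∈ Finset.range (n (k+j) - n k), |b (n k + i)| =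
                ∑ i ∈ Finset.Ico (n k) (n (k+j)), |b i| from
              (Finset.sum_Ico_eq_sum_range (fun i => |b i|) (n k) (n (k+j))).symm]
            apply Finset.sum_le_sum_of_subset_of_nonneg
            · intro i hi
              rw [Finset.mem_range]
              rw [Finset.mem_Ico] at hi
              omega
            · intro i _ _
              exact abs_nonneg _
    have tail : (∑' i : ℕ, pTerm b τ (fun θ => x (t + θ)) k (n k + (i + (n (k+j) - n k)))) ≤
        pSemi b τ n φ (k + j) := by
      refine Summable.tsum_le_tsum (f := fun i => pTerm b τ (fun θ => x (t + θ)) k (n k + (i + (n (k+j) - n k))))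
        (g := fun i => pTerm b τ φ (k+j) (n (k+j) + i)) ?_
        ((summable_nat_add_iff (n (k+j) - n k)).2 hsum) (hφ.2 (k+j))
      intro i
      have hidx : n k + (i + (n (k+j) - n k)) = n (k+j) + i := by have := hnmono k; omega
      simp only [hidx]
      exact lemA k _ (Nat.le_add_right _ _)
    calc pSemi b τ n (fun θ => x (t + θ)) k
        = ∑ i ∈ Finset.range (n (k+j) - n k), pTerm b τ (fun θ => x (t + θ)) k (n k + i) +
          ∑' i : ℕ, pTerm b τ (fun θ => x (t + θ)) k (n k + (i + (n (k+j) - n k))) :=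
          (Summable.sum_add_tsum_nat_add _ hsum).symm
      _ ≤ _ := add_le_add head tail
end

section
/- Let {b_i} ∈ ℓ¹ and suppose a unique solution x_φ of the delay equation exists for each φ ∈ BC(-∞,0]. The operator A: D(A) → BC(-∞,0], Aψ = ψ', with D(A) = {ψ ∈ BC¹(-∞,0] : ψ'(0) = Σ_i b_i ψ(−τ_i)}, is not densely defined: the closure of D(A) in the sup norm is contained in the proper closed subspace BUC(-∞,0] of bounded uniformly continuous functions. -/
open Filter

/-- For {b_i} ∈ ℓ¹, the operator Aψ = ψ' with domain
D(A) = {ψ ∈ BC¹(-∞,0] : ψ'(0) = Σᵢ bᵢψ(−τᵢ)} is not densely defined in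
BC(-∞,0]: every sup-norm limit of elements of D(A) is uniformly continuous
(so the closure of D(A) lies in the proper closed subspace BUC(-∞,0]), while
there exist bounded continuous functions that are not uniformly continuous. -/
theorem domain_not_dense (b τ : ℕ → ℝ)
    (hb : Summable fun i => |b i|)
    (hτ : StrictMono τ) (hτpos : ∀ i, 0 < τ i)
    (hτtop : Tendsto τ atTop atTop) :
    -- closure of D(A) ⊆ BUC(-∞,0]
    (∀ φ : ℝ → ℝ, ContinuousOn φ (Set.Iic 0) → (∃ M : ℝ, ∀ θ ≤ (0:ℝ), |φ θ| ≤ M) →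
      (∀ ε > (0:ℝ), ∃ ψ ψ' : ℝ → ℝ,
        (∀ θ ≤ (0:ℝ), HasDerivWithinAt ψ (ψ' θ) (Set.Iic 0) θ) ∧
        ContinuousOn ψ' (Set.Iic 0) ∧
        (∃ M : ℝ, ∀ θ ≤ (0:ℝ), |ψ θ| ≤ M) ∧
        (∃ M : ℝ, ∀ θ ≤ (0:ℝ), |ψ' θ| ≤ M) ∧
        ψ' 0 = ∑' i, b i * ψ (-τ i) ∧
        (∀ θ ≤ (0:ℝ), |φ θ - ψ θ| ≤ ε)) →
      UniformContinuousOn φ (Set.Iic 0)) ∧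
    -- BUC(-∞,0] is a proper subspace of BC(-∞,0]
    (∃ φ : ℝ → ℝ, ContinuousOn φ (Set.Iic 0) ∧ (∃ M : ℝ, ∀ θ ≤ (0:ℝ), |φ θ| ≤ M) ∧
      ¬ UniformContinuousOn φ (Set.Iic 0)) := by
  constructor
  · intro φ hφc hφb happrox
    rw [Metric.uniformContinuousOn_iff]
    intro ε hε
    obtain ⟨ψ, ψ', hderiv, -, -, ⟨M, hM⟩, -, hclose⟩ := happrox (ε/3) (by linarith)
    have hM0 : 0 ≤ M := le_trans (abs_nonneg _) (hM 0 le_rfl)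
    refine ⟨ε/3/(M+1), by positivity, ?_⟩
    intro x hx y hy hxy
    have hlip : |ψ x - ψ y| ≤ M * |x - y| := by
      have := Convex.norm_image_sub_le_of_norm_hasDerivWithin_le
        (f := ψ) (f' := ψ') (fun t ht => hderiv t ht)
        (fun t ht => by simpa [Real.norm_eq_abs] using hM t ht)
        (convex_Iic 0) hy hx
      simpa [Real.norm_eq_abs] using this
    have h1 := hclose x hx
    have h2 := hclose y hy
    have hd : |x - y| < ε/3/(M+1) := by simpa [Real.dist_eq] using hxy
    have hMd : M * |x - y| < ε/3 := by
      have : M * |x - y| ≤ M * (ε/3/(M+1)) :=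
        mul_le_mul_of_nonneg_left hd.le hM0
      have h3 : M * (ε/3/(M+1)) < ε/3 := by
        rw [mul_div_assoc', div_lt_iff₀ (by linarith)]
        nlinarith
      linarith
    have : |φ x - φ y| ≤ |φ x - ψ x| + |ψ x - ψ y| + |ψ y - φ y| := by
      have := abs_sub_abs_le_abs_sub (φ x - φ y) 0
      calc |φ x - φ y| = |(φ x - ψ x) + (ψ x - ψ y) + (ψ y - φ y)| := by ring_nf
        _ ≤ |φ x - ψ x| + |ψ x - ψ y| + |ψ y - φ y| := by
            exact (abs_add_le _ _).trans (by gcongr; exact abs_add_le _ _)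
    rw [Real.dist_eq]
    have h2' : |ψ y - φ y| ≤ ε/3 := by rw [abs_sub_comm]; exact h2
    linarith [hlip, h1, this]
  · refine ⟨fun θ => Real.sin (θ^2), ?_, ⟨1, fun θ _ => Real.abs_sin_le_one _⟩, ?_⟩
    · exact (Real.continuous_sin.comp (continuous_pow 2)).continuousOn
    · intro h
      rw [Metric.uniformContinuousOn_iff] at h
      obtain ⟨δ, hδ, H⟩ := h 1 one_pos
      have hπ := Real.pi_pos
      obtain ⟨n, hn⟩ := exists_nat_ge ((Real.pi/δ)^2/(2*Real.pi) + 1)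
      set a : ℝ := 2*Real.pi*n with ha_def
      have ha : (Real.pi/δ)^2 < a := by
        have : (Real.pi/δ)^2/(2*Real.pi) + 1 ≤ (n:ℝ) := hn
        have h2π : 0 < 2*Real.pi := by linarith
        have h4 : 2*Real.pi*((Real.pi/δ)^2/(2*Real.pi)) = (Real.pi/δ)^2 :=
          mul_div_cancel₀ _ (ne_of_gt h2π)
        nlinarith [mul_le_mul_of_nonneg_left this h2π.le]
      have ha0 : 0 ≤ a := le_of_lt (lt_of_le_of_lt (sq_nonneg _) ha)
      have hsa : Real.pi/δ < Real.sqrt a := by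
        have := Real.sqrt_lt_sqrt (sq_nonneg (Real.pi/δ)) ha
        rwa [Real.sqrt_sq (by positivity)] at this
      have hsa0 : 0 < Real.sqrt a := lt_of_le_of_lt (by positivity) hsa
      set x : ℝ := -Real.sqrt (a + Real.pi/2)
      set y : ℝ := -Real.sqrt a
      have hx : x ≤ 0 := neg_nonpos.mpr (Real.sqrt_nonneg _)
      have hy : y ≤ 0 := neg_nonpos.mpr (Real.sqrt_nonneg _)
      have hsqx : x^2 = a + Real.pi/2 := by
        rw [neg_pow]; simp [Real.sq_sqrt (by positivity : (0:ℝ) ≤ a + Real.pi/2)]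
      have hsqy : y^2 = a := by
        rw [neg_pow]; simp [Real.sq_sqrt ha0]
      have hub : Real.sqrt (a + Real.pi/2) ≤ Real.sqrt a + (Real.pi/2)/Real.sqrt a := by
        have key : a + Real.pi/2 ≤ (Real.sqrt a + (Real.pi/2)/Real.sqrt a)^2 := by
          have hsq : Real.sqrt a ^ 2 = a := Real.sq_sqrt ha0
          have hmul : Real.sqrt a * ((Real.pi/2)/Real.sqrt a) = Real.pi/2 :=
            mul_div_cancel₀ _ (ne_of_gt hsa0)
          nlinarith [sq_nonneg ((Real.pi/2)/Real.sqrt a)]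
        calc Real.sqrt (a + Real.pi/2) ≤ Real.sqrt ((Real.sqrt a + (Real.pi/2)/Real.sqrt a)^2) :=
              Real.sqrt_le_sqrt key
          _ = Real.sqrt a + (Real.pi/2)/Real.sqrt a := Real.sqrt_sq (by positivity)
      have hdist : dist x y < δ := by
        rw [Real.dist_eq]
        have hmono : Real.sqrt a ≤ Real.sqrt (a + Real.pi/2) :=
          Real.sqrt_le_sqrt (by linarith)
        have : |x - y| = Real.sqrt (a + Real.pi/2) - Real.sqrt a := by
          rw [abs_of_nonpos (by simp only [x, y]; linarith)]
          simp only [x, y]; ring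
        rw [this]
        have hfin : (Real.pi/2)/Real.sqrt a < δ := by
          rw [div_lt_iff₀ hsa0]
          have : δ * (Real.pi/δ) < δ * Real.sqrt a := by
            exact mul_lt_mul_of_pos_left hsa hδ
          rw [mul_div_cancel₀ _ (ne_of_gt hδ)] at this
          linarith
        linarith
      have hval := H x hx y hy hdist
      have hsinx : Real.sin (x^2) = 1 := by
        rw [hsqx, Real.sin_add_pi_div_two, ha_def,
          show 2*Real.pi*(n:ℝ) = (n:ℝ)*(2*Real.pi) from by ring, Real.cos_nat_mul_two_pi]
      have hsiny : Real.sin (y^2) = 0 := by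
        rw [hsqy, ha_def]
        have : 2*Real.pi*(n:ℝ) = ((2*n : ℕ):ℝ)*Real.pi := by push_cast; ring
        rw [this, Real.sin_nat_mul_pi]
      rw [Real.dist_eq, hsinx, hsiny] at hval
      norm_num at hval
end
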